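/- Let F be a nonempty family of k-subsets of [n] such that every member A of F satisfies |A ∩ [t+2]| ≥ t+1 (i.e., F ⊆ A_0 ∪ A_1). Then for 1 < j < t, |∂^j F| / |F| ≥ C(t+2, j+1) / (t+2). -/

import Mathlib

open Finset

theorem semistar_subfamily_shadow (n k t j : ℕ) (𝓕 : Finset (Finset ℕ))
    (hj1 : 1 < j) (hjt : j < t) (htk : t < k) (hkn : k < n)
    (h𝓕 : 𝓕.Nonempty)
    (hsub : ∀ F ∈ 𝓕, F ⊆ Finset.Icc 1 n)
    (hcard : ∀ F ∈ 𝓕, F.card = k)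
    (hsemi : ∀ F ∈ 𝓕, t + 1 ≤ (F ∩ Finset.Icc 1 (t + 2)).card) :
    ((((Finset.Icc 1 n).powersetCard (k - j)).filter
        (fun G => ∃ F ∈ 𝓕, G ⊆ F)).card : ℚ) / (𝓕.card : ℚ) ≥
      ((t + 2).choose (j + 1) : ℚ) / ((t + 2 : ℕ) : ℚ) := by
  classical
  set S := Finset.Icc 1 (t + 2) with hSdef
  set D := ((Finset.Icc 1 n).powersetCard (k - j)).filter (fun G => ∃ F ∈ 𝓕, G ⊆ F) with hDdef
  set P := (𝓕 ×ˢ D).filter (fun p => p.2 ⊆ p.1 ∧ p.1 \ p.2 ⊆ S) with hPdef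
  have hjk : j ≤ k := le_of_lt (hjt.trans htk)
  have hScard : S.card = t + 2 := by simp [hSdef]
  -- lower bound on P.card
  have hfibF : ∀ F ∈ 𝓕, (t + 1).choose j ≤ (P.filter fun p => p.1 = F).card := by
    intro F hF
    have hFS : t + 1 ≤ (F ∩ S).card := hsemi F hF
    have hinj : ((F ∩ S).powersetCard j).card ≤ (P.filter fun p => p.1 = F).card := by
      apply card_le_card_of_injOn (fun J => (F, F \ J))
      · intro J hJ
        rw [mem_coe, mem_powersetCard] at hJ
        obtain ⟨hJsub, hJcard⟩ := hJ
        have hJF : J ⊆ F := hJsub.trans inter_subset_left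
        have hJS : J ⊆ S := hJsub.trans inter_subset_right
        have hFJ : F \ (F \ J) = J := Finset.sdiff_sdiff_eq_self hJF
        rw [mem_coe, mem_filter]
        refine ⟨?_, rfl⟩
        rw [hPdef, mem_filter, mem_product]
        refine ⟨⟨hF, ?_⟩, sdiff_subset, by rw [hFJ]; exact hJS⟩
        rw [hDdef, mem_filter, mem_powersetCard]
        exact ⟨⟨sdiff_subset.trans (hsub F hF), by
          rw [card_sdiff_of_subset hJF, hcard F hF, hJcard]⟩, F, hF, sdiff_subset⟩
      · intro J1 h1 J2 h2 heq
        simp only [mem_coe, mem_powersetCard] at h1 h2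
        have hJ1 : J1 ⊆ F := h1.1.trans inter_subset_left
        have hJ2 : J2 ⊆ F := h2.1.trans inter_subset_left
        have : F \ (F \ J1) = F \ (F \ J2) := by
          simp only [Prod.mk.injEq] at heq
          rw [heq.2]
        rwa [Finset.sdiff_sdiff_eq_self hJ1, Finset.sdiff_sdiff_eq_self hJ2] at this
    calc (t + 1).choose j ≤ (F ∩ S).card.choose j := Nat.choose_le_choose j hFS
      _ = ((F ∩ S).powersetCard j).card := (card_powersetCard j _).symm
      _ ≤ _ := hinj
  have hlow : (t + 1).choose j * 𝓕.card ≤ P.card := by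
    have hsum1 : P.card = ∑ F ∈ 𝓕, (P.filter fun p => p.1 = F).card :=
      card_eq_sum_card_fiberwise (fun p hp => (mem_product.1 (mem_filter.1 hp).1).1)
    rw [hsum1]
    calc (t + 1).choose j * 𝓕.card = ∑ _F ∈ 𝓕, (t + 1).choose j := by
          rw [sum_const, smul_eq_mul, mul_comm]
      _ ≤ _ := sum_le_sum hfibF
  -- upper bound on P.card
  have hfibG : ∀ G ∈ D, (P.filter fun p => p.2 = G).card ≤ j + 1 := by
    intro G hG
    rcases (P.filter fun p => p.2 = G).eq_empty_or_nonempty with he | ⟨p0, hp0⟩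
    · simp [he]
    have hGcard : G.card = k - j := by
      rw [hDdef, mem_filter, mem_powersetCard] at hG
      exact hG.1.2
    -- extract facts from the witness p0
    rw [mem_filter] at hp0
    obtain ⟨hp0P, hp0G⟩ := hp0
    rw [hPdef, mem_filter, mem_product] at hp0P
    obtain ⟨⟨hF0, -⟩, hGF0, hF0G⟩ := hp0P
    rw [hp0G] at hGF0 hF0G
    have hF0card : p0.1.card = k := hcard _ hF0
    have hF0Gcard : (p0.1 \ G).card = j := by
      rw [card_sdiff_of_subset hGF0, hF0card, hGcard]; omega
    have hsplit : p0.1 ∩ S ⊆ (G ∩ S) ∪ (p0.1 \ G) := by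
      intro x hx
      rw [mem_inter] at hx
      rw [mem_union, mem_inter, mem_sdiff]
      by_cases hxG : x ∈ G
      · exact Or.inl ⟨hxG, hx.2⟩
      · exact Or.inr ⟨hx.1, hxG⟩
    have hcard1 : t + 1 ≤ (G ∩ S).card + j := by
      calc t + 1 ≤ (p0.1 ∩ S).card := hsemi _ hF0
        _ ≤ ((G ∩ S) ∪ (p0.1 \ G)).card := card_le_card hsplit
        _ ≤ (G ∩ S).card + (p0.1 \ G).card := card_union_le _ _
        _ = (G ∩ S).card + j := by rw [hF0Gcard]
    have hSG : (S \ G).card ≤ j + 1 := by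
      have h1 : (S \ G).card + (S ∩ G).card = S.card := card_sdiff_add_card_inter S G
      have h2 : (S ∩ G).card = (G ∩ S).card := by rw [inter_comm]
      omega
    have hinj2 : (P.filter fun p => p.2 = G).card ≤ ((S \ G).powersetCard j).card := by
      apply card_le_card_of_injOn (fun p => p.1 \ G)
      · intro p hp
        rw [mem_coe, mem_filter] at hp
        obtain ⟨hpP, hpG⟩ := hp
        rw [hPdef, mem_filter, mem_product] at hpP
        obtain ⟨⟨hpF, -⟩, hGp, hpS⟩ := hpP
        rw [hpG] at hGp hpS
        rw [mem_coe, mem_powersetCard]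
        constructor
        · exact subset_sdiff.2 ⟨hpS, sdiff_disjoint⟩
        · rw [card_sdiff_of_subset hGp, hcard _ hpF, hGcard]; omega
      · intro p hp q hq heq
        simp only [coe_filter, Set.mem_setOf_eq] at hp hq
        obtain ⟨hpP, hpG⟩ := hp
        obtain ⟨hqP, hqG⟩ := hq
        rw [hPdef, mem_filter, mem_product] at hpP hqP
        have hGp : G ⊆ p.1 := by rw [← hpG]; exact hpP.2.1
        have hGq : G ⊆ q.1 := by rw [← hqG]; exact hqP.2.1
        have h1 : p.1 \ G ∪ G = p.1 := sdiff_union_of_subset hGp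
        have h2 : q.1 \ G ∪ G = q.1 := sdiff_union_of_subset hGq
        have heq' : p.1 \ G = q.1 \ G := heq
        have hfst : p.1 = q.1 := by rw [← h1, ← h2, heq']
        exact Prod.ext hfst (by rw [hpG, hqG])
    calc (P.filter fun p => p.2 = G).card ≤ ((S \ G).powersetCard j).card := hinj2
      _ = (S \ G).card.choose j := card_powersetCard j _
      _ ≤ (j + 1).choose j := Nat.choose_le_choose j hSG
      _ = j + 1 := Nat.choose_succ_self_right j
  have hup : P.card ≤ (j + 1) * D.card := by
    have hsum2 : P.card = ∑ G ∈ D, (P.filter fun p => p.2 = G).card :=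
      card_eq_sum_card_fiberwise (fun p hp => (mem_product.1 (mem_filter.1 hp).1).2)
    rw [hsum2]
    calc ∑ G ∈ D, (P.filter fun p => p.2 = G).card ≤ ∑ _G ∈ D, (j + 1) :=
          sum_le_sum hfibG
      _ = (j + 1) * D.card := by rw [sum_const, smul_eq_mul, mul_comm]
  -- combine
  have hkey : (t + 2) * (t + 1).choose j = (t + 2).choose (j + 1) * (j + 1) :=
    Nat.add_one_mul_choose_eq (t + 1) j
  have hmain : (t + 2).choose (j + 1) * 𝓕.card ≤ (t + 2) * D.card := by
    have h1 : (t + 1).choose j * 𝓕.card ≤ (j + 1) * D.card := hlow.trans hup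
    have h2 : (j + 1) * ((t + 2).choose (j + 1) * 𝓕.card) ≤ (j + 1) * ((t + 2) * D.card) := by
      calc (j + 1) * ((t + 2).choose (j + 1) * 𝓕.card)
          = (t + 2) * ((t + 1).choose j * 𝓕.card) := by rw [← mul_assoc, ← mul_assoc,
            mul_comm (j + 1), hkey]
        _ ≤ (t + 2) * ((j + 1) * D.card) := Nat.mul_le_mul_left _ h1
        _ = (j + 1) * ((t + 2) * D.card) := by ring
    exact Nat.le_of_mul_le_mul_left h2 (by omega)
  have h𝓕pos : (0 : ℚ) < (𝓕.card : ℚ) := by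
    exact_mod_cast card_pos.2 h𝓕
  rw [ge_iff_le, div_le_div_iff₀ (by positivity) h𝓕pos]
  exact_mod_cast hmain.trans_eq (mul_comm _ _)
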